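/- arXiv:1710.02048 — 3 statements merged into one kernel-verified Lean document; each statement's English description precedes it below -/
import Mathlib

section
/- Let λ_min > 0 and M ≥ 3. Consider the set S = {λ + (μ₁/2)·exp(−iπ/M) + (μ₂/2)·exp(iπ/M) : λ ≥ −λ_min, μ₁ ≥ 0, μ₂ ≥ 0} ⊆ ℂ. Then every complex number z with |z| < λ_min·sin(π/M) lies in the interior of S. -/
theorem mem_interior_of_small_norm (lmin : ℝ) (hl : 0 < lmin) (M : ℕ) (hM : 3 ≤ M)
    (S : Set ℂ)
    (hS : S = {z : ℂ | ∃ l μ₁ μ₂ : ℝ, -lmin ≤ l ∧ 0 ≤ μ₁ ∧ 0 ≤ μ₂ ∧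
      z = (l : ℂ) + (μ₁ / 2 : ℂ) * Complex.exp (-(Real.pi / M) * Complex.I)
            + (μ₂ / 2 : ℂ) * Complex.exp ((Real.pi / M) * Complex.I)})
    (z : ℂ) (hz : ‖z‖ < lmin * Real.sin (Real.pi / M)) :
    z ∈ interior S := by
  set θ : ℝ := Real.pi / M with hθ
  have hMpos : (0:ℝ) < M := by positivity
  have hθpos : 0 < θ := by positivity
  have hθlt : θ < Real.pi := by
    rw [hθ]
    have : (1:ℝ) < M := by exact_mod_cast lt_of_lt_of_le (by norm_num) hM
    calc Real.pi / M < Real.pi / 1 := by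
          apply div_lt_div_of_pos_left Real.pi_pos (by norm_num) this
      _ = Real.pi := by ring
  have hs : 0 < Real.sin θ := Real.sin_pos_of_pos_of_lt_pi hθpos hθlt
  set s := Real.sin θ
  set c := Real.cos θ
  set r := lmin * s with hr
  have hrpos : 0 < r := by positivity
  -- show the ball of radius r around 0 is contained in S
  have hball : Metric.ball (0:ℂ) r ⊆ S := by
    intro w hw
    rw [Metric.mem_ball, dist_zero_right] at hw
    have hw' : ‖w‖ < r := hw
    set x := w.re
    set y := w.im
    refine hS ▸ ⟨x - |y| * c / s, (|y| - y) / s, (|y| + y) / s, ?_, ?_, ?_, ?_⟩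
    · -- x - |y|*c/s ≥ -lmin
      have habs : ‖w‖ = Real.sqrt (x ^ 2 + y ^ 2) := by
        rw [Complex.norm_def, Complex.normSq_apply]; ring_nf; rfl
      have h1 : |y| * c - x * s ≤ ‖w‖ := by
        have hnn : 0 ≤ ‖w‖ := norm_nonneg w
        have hsq : (‖w‖) ^ 2 = x ^ 2 + y ^ 2 := by
          rw [habs, Real.sq_sqrt] ; positivity
        have hy2 : |y| ^ 2 = y ^ 2 := sq_abs y
        have hcs : c ^ 2 + s ^ 2 = 1 := by
          rw [add_comm]; exact Real.sin_sq_add_cos_sq θ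
        nlinarith [sq_nonneg (|y| * s + x * c), sq_nonneg (|y| * c - x * s - ‖w‖)]
      have h2 : |y| * c - x * s < lmin * s := lt_of_le_of_lt h1 hw'
      have h3 : (|y| * c - x * s) / s < lmin := (div_lt_iff₀ hs).mpr h2
      have h4 : -(x - |y| * c / s) = (|y| * c - x * s) / s := by field_simp; ring
      linarith [h4 ▸ h3]
    · exact div_nonneg (by linarith [le_abs_self y]) hs.le
    · exact div_nonneg (by linarith [neg_abs_le y]) hs.le
    · -- the complex identity
      have he1 : Complex.exp (-(θ:ℂ) * Complex.I) = (c:ℂ) - (s:ℂ) * Complex.I := by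
        rw [show (-(θ:ℂ) * Complex.I) = (-θ:ℝ) * Complex.I by push_cast; ring,
          Complex.exp_mul_I]
        push_cast
        rw [Complex.cos_neg, Complex.sin_neg, ← Complex.ofReal_cos, ← Complex.ofReal_sin]
        ring
      have he2 : Complex.exp ((θ:ℂ) * Complex.I) = (c:ℂ) + (s:ℂ) * Complex.I := by
        rw [Complex.exp_mul_I, ← Complex.ofReal_cos, ← Complex.ofReal_sin]
      have hθc : ((Real.pi / M : ℝ) : ℂ) = (θ : ℂ) := by rw [hθ]
      have hw_eq : w = (x:ℂ) + (y:ℂ) * Complex.I := (Complex.re_add_im w).symm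
      rw [show (-(Real.pi / (M:ℂ)) * Complex.I) = -(θ:ℂ) * Complex.I by push_cast [hθ]; ring,
        show ((Real.pi / (M:ℂ)) * Complex.I) = (θ:ℂ) * Complex.I by push_cast [hθ]; ring,
        he1, he2, hw_eq]
      have hsne : (s:ℂ) ≠ 0 := by exact_mod_cast hs.ne'
      push_cast
      field_simp
      ring
  have hz' : z ∈ Metric.ball (0:ℂ) r := by
    rw [Metric.mem_ball, dist_zero_right]; exact hz
  exact interior_maximal hball Metric.isOpen_ball hz'
end

section
/- Let λ_min > 0 and M ≥ 3, and let S = {λ + (μ₁/2)·exp(−iπ/M) + (μ₂/2)·exp(iπ/M) : λ ≥ −λ_min, μ₁ ≥ 0, μ₂ ≥ 0}. If z ∈ ℂ satisfies |z| < λ_min·sin(π/M), then z can be written as z = λ + (μ₁/2)e^{−iπ/M} + (μ₂/2)e^{iπ/M} with λ > −λ_min, μ₁ ≥ 0, μ₂ ≥ 0. -/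
theorem rep_of_small_norm (lmin : ℝ) (hl : 0 < lmin) (M : ℕ) (hM : 3 ≤ M)
    (z : ℂ) (hz : ‖z‖ < lmin * Real.sin (Real.pi / M)) :
    ∃ l μ₁ μ₂ : ℝ, -lmin < l ∧ 0 ≤ μ₁ ∧ 0 ≤ μ₂ ∧
      z = (l : ℂ) + (μ₁ / 2 : ℂ) * Complex.exp (-(Real.pi / M) * Complex.I)
            + (μ₂ / 2 : ℂ) * Complex.exp ((Real.pi / M) * Complex.I) := by
  set θ : ℝ := Real.pi / M with hθdef
  have hMpos : (0:ℝ) < M := by positivity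
  have hθpos : 0 < θ := div_pos Real.pi_pos hMpos
  have hθlt : θ < Real.pi / 2 := by
    have h3 : (3:ℝ) ≤ M := by exact_mod_cast hM
    calc θ ≤ Real.pi / 3 := by
            apply div_le_div_of_nonneg_left Real.pi_pos.le (by norm_num) h3
      _ < Real.pi / 2 := by
            apply div_lt_div_of_pos_left Real.pi_pos (by norm_num) (by norm_num)
  set s := Real.sin θ with hsdef
  set c := Real.cos θ with hcdef
  have hs : 0 < s := Real.sin_pos_of_pos_of_lt_pi hθpos (by linarith [Real.pi_pos])
  have hc : 0 ≤ c := Real.cos_nonneg_of_mem_Icc ⟨by linarith, hθlt.le⟩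
  have hsc : s^2 + c^2 = 1 := by
    rw [hsdef, hcdef]; exact Real.sin_sq_add_cos_sq θ
  set x := z.re with hxdef
  set y := z.im with hydef
  have habs : x^2 + y^2 < (lmin * s)^2 := by
    have h1 : ‖z‖^2 < (lmin * s)^2 := by
      apply pow_lt_pow_left₀ hz (norm_nonneg z) (by norm_num)
    have h2 : ‖z‖^2 = x^2 + y^2 := by
      rw [Complex.sq_norm, Complex.normSq_apply]; ring
    linarith
  refine ⟨x - |y| * c / s, (|y| - y) / s, (|y| + y) / s, ?_, ?_, ?_, ?_⟩
  · -- -lmin < x - |y|*c/s  i.e.  -lmin*s < x*s - |y|*c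
    rw [neg_lt, neg_sub, sub_lt_iff_lt_add, div_lt_iff₀ hs]
    nlinarith [sq_nonneg (|y| * s + x * c), sq_abs y, abs_nonneg y,
      mul_pos hl hs, sq_nonneg (lmin * s + x * s - |y| * c)]
  · apply div_nonneg _ hs.le
    linarith [neg_abs_le y, le_abs_self y]
  · apply div_nonneg _ hs.le
    linarith [neg_abs_le y, le_abs_self y]
  · have hθC : ((θ:ℝ):ℂ) = (Real.pi:ℂ) / (M:ℂ) := by rw [hθdef]; push_cast; ring
    have hexp1 : Complex.exp (-(Real.pi / M) * Complex.I) = (c:ℂ) - (s:ℂ) * Complex.I := by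
      rw [show (-(Real.pi / M : ℂ)) = -((θ:ℝ):ℂ) by rw [hθC]]
      rw [Complex.exp_mul_I, Complex.cos_neg, Complex.sin_neg,
        ← Complex.ofReal_cos, ← Complex.ofReal_sin, ← hcdef, ← hsdef]
      ring
    have hexp2 : Complex.exp ((Real.pi / M) * Complex.I) = (c:ℂ) + (s:ℂ) * Complex.I := by
      rw [show ((Real.pi / M : ℂ)) = ((θ:ℝ):ℂ) by rw [hθC]]
      rw [Complex.exp_mul_I, ← Complex.ofReal_cos, ← Complex.ofReal_sin, ← hcdef, ← hsdef]
    rw [hexp1, hexp2]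
    have hz' : z = (x:ℂ) + (y:ℂ) * Complex.I := (Complex.re_add_im z).symm
    rw [hz']
    have hs' : (s:ℂ) ≠ 0 := by exact_mod_cast hs.ne'
    push_cast
    field_simp
    ring
end

section
/- Let x ∈ ℂⁿ and X ∈ ℂ^{n×n} Hermitian with X ⪰ x x†. Suppose the block matrix [[1, x†],[x, X]] has a decomposition as Σ_{j=1}^{n+1} (t_j; v_j)(t_j; v_j)† with t_j ∈ ℝ, v_j ∈ ℂⁿ. Define y ∈ ℝ^{2n} by stacking Σ_j t_j Re(v_j) and Σ_j t_j Im(v_j), and Y = Σ_j [Re(v_j); Im(v_j)][Re(v_j); Im(v_j)]ᵀ. Then [[1, yᵀ],[y, Y]] ⪰ 0 and Y_{i,i} + Y_{n+i,n+i} = X_{i,i} for all i = 1, ..., n. -/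
open Matrix
open scoped ComplexOrder

lemma vecMulVec_self_posSemidef {m : Type*} [Fintype m] (u : m → ℝ) :
    (Matrix.vecMulVec u u).PosSemidef := by
  rw [Matrix.posSemidef_iff_dotProduct_mulVec]
  constructor
  · ext p q
    simp [Matrix.vecMulVec, Matrix.conjTranspose_apply, mul_comm]
  · intro z
    have : star z ⬝ᵥ (Matrix.vecMulVec u u *ᵥ z) = (u ⬝ᵥ z) * (u ⬝ᵥ z) := by
      simp [dotProduct, Matrix.mulVec, Matrix.vecMulVec, Finset.mul_sum,
        Finset.sum_mul]
      ring_nf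
      rw [Finset.sum_comm]
      congr 1; ext p; congr 1; ext q; ring
    rw [this]
    exact mul_self_nonneg _

theorem real_lift_of_decomposition {n : ℕ}
    (x : Fin n → ℂ) (X : Matrix (Fin n) (Fin n) ℂ)
    (hX : (X - Matrix.of fun i j => x i * (starRingEnd ℂ) (x j)).PosSemidef)
    (t : Fin (n + 1) → ℝ) (v : Fin (n + 1) → Fin n → ℂ)
    (hdec : Matrix.fromBlocks
        (1 : Matrix Unit Unit ℂ)
        (Matrix.of fun (_ : Unit) j => (starRingEnd ℂ) (x j))
        (Matrix.of fun i (_ : Unit) => x i) X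
      = ∑ k : Fin (n + 1), Matrix.fromBlocks
          (Matrix.of fun (_ _ : Unit) => ((t k : ℂ) * (starRingEnd ℂ) (t k : ℂ)))
          (Matrix.of fun (_ : Unit) j => (t k : ℂ) * (starRingEnd ℂ) (v k j))
          (Matrix.of fun i (_ : Unit) => v k i * (starRingEnd ℂ) (t k : ℂ))
          (Matrix.of fun i j => v k i * (starRingEnd ℂ) (v k j)))
    (w : Fin (n + 1) → (Fin n ⊕ Fin n) → ℝ)
    (hw : ∀ k, w k = Sum.elim (fun i => (v k i).re) (fun i => (v k i).im))
    (y : (Fin n ⊕ Fin n) → ℝ)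
    (hy : y = fun p => ∑ k, t k * w k p)
    (Y : Matrix (Fin n ⊕ Fin n) (Fin n ⊕ Fin n) ℝ)
    (hY : Y = ∑ k, Matrix.of fun p q => w k p * w k q) :
    (Matrix.fromBlocks
        (1 : Matrix Unit Unit ℝ)
        (Matrix.of fun (_ : Unit) q => y q)
        (Matrix.of fun p (_ : Unit) => y p)
        Y).PosSemidef
    ∧ ∀ i, Y (Sum.inl i) (Sum.inl i) + Y (Sum.inr i) (Sum.inr i) = (X i i).re := by
  have h11 : (1 : ℝ) = ∑ k, t k * t k := by
    have h := congrFun (congrFun hdec (Sum.inl ())) (Sum.inl ())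
    simp only [Matrix.sum_apply, Matrix.fromBlocks_apply₁₁, Matrix.of_apply,
      Matrix.one_apply_eq, Complex.conj_ofReal, ← Complex.ofReal_mul,
      ← Complex.ofReal_sum] at h
    exact_mod_cast h
  constructor
  · have heq : Matrix.fromBlocks
        (1 : Matrix Unit Unit ℝ)
        (Matrix.of fun (_ : Unit) q => y q)
        (Matrix.of fun p (_ : Unit) => y p)
        Y
      = ∑ k, Matrix.vecMulVec (Sum.elim (fun _ : Unit => t k) (w k))
          (Sum.elim (fun _ : Unit => t k) (w k)) := by
      subst hy hY
      ext p q
      cases p <;> cases q <;>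
        simp [Matrix.sum_apply, Matrix.vecMulVec, Matrix.one_apply, mul_comm, ← h11]
    rw [heq]
    exact Finset.sum_induction _ _ (fun a b ha hb => ha.add hb)
      Matrix.PosSemidef.zero (fun k _ => vecMulVec_self_posSemidef _)
  · intro i
    have h := congrFun (congrFun hdec (Sum.inr i)) (Sum.inr i)
    simp only [Matrix.sum_apply, Matrix.fromBlocks_apply₂₂, Matrix.of_apply] at h
    have hre := congrArg Complex.re h
    rw [Complex.re_sum] at hre
    subst hY
    simp only [Matrix.sum_apply, Matrix.of_apply, hw, Sum.elim_inl, Sum.elim_inr]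
    rw [← Finset.sum_add_distrib, hre]
    congr 1
    ext k
    simp [Complex.mul_conj, Complex.normSq_apply]
end
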